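/- Let C be a cycle with m vertices (goods) and let n agents have additive nonnegative utility functions u_1,...,u_n. If m < 2n, then there exists an allocation of the goods into n connected bundles such that agent i's bundle has value at least mms^(n)(C,u_i), for every i. (One may use as given that mms-allocations always exist on paths/trees.) -/

import Mathlib

open scoped BigOperators

noncomputable section

/-- Total value of a bundle under an additive utility. -/
def bval {V : Type*} [DecidableEq V] (u : V → ℝ) (S : Finset V) : ℝ := ∑ v ∈ S, u v

/-- A `G`-bundle: a (possibly empty) set of vertices inducing a connected subgraph. -/
def IsBundle {V : Type*} (G : SimpleGraph V) (S : Finset V) : Prop :=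
  (S : Set V) = ∅ ∨ (G.induce (S : Set V)).Connected

/-- A split of the vertex set `A` into `n` pairwise disjoint `G`-bundles covering `A`. -/
def IsSplitOn {V : Type*} [DecidableEq V] (G : SimpleGraph V) (A : Finset V) (n : ℕ)
    (P : Fin n → Finset V) : Prop :=
  (∀ i, IsBundle G (P i)) ∧ (∀ i j, i ≠ j → Disjoint (P i) (P j)) ∧
  (∀ i, P i ⊆ A) ∧ (∀ v ∈ A, ∃ i, v ∈ P i)

/-- The maximin share over splits of `A` into `n` `G`-bundles. -/
def mmsOn {V : Type*} [DecidableEq V] (G : SimpleGraph V) (A : Finset V)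
    (n : ℕ) (u : V → ℝ) : ℝ :=
  sSup {q : ℝ | ∃ P : Fin n → Finset V, IsSplitOn G A n P ∧ ∀ i, q ≤ bval u (P i)}

/-- The maximin share `mms^(n)(G,u)`. -/
def mms {V : Type*} [DecidableEq V] [Fintype V] (G : SimpleGraph V)
    (n : ℕ) (u : V → ℝ) : ℝ := mmsOn G Finset.univ n u

/-- The cycle on `m` vertices, identified with `ZMod m`. -/
def cycleGraph (m : ℕ) : SimpleGraph (ZMod m) :=
  SimpleGraph.fromRel (fun v w => w = v + 1)

end

section Arc
variable {m : ℕ} [NeZero m]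

/-- the arc of length `k` starting at `a`. -/
noncomputable def arc (a : ZMod m) (k : ℕ) : Finset (ZMod m) :=
  (Finset.range k).image (fun j : ℕ => a + (j : ZMod m))

lemma cycle_adj (hm : 3 ≤ m) (v : ZMod m) : (cycleGraph m).Adj v (v + 1) := by
  constructor
  · intro h
    have h1 : (1 : ZMod m) = 0 := by
      have := h.symm
      nth_rewrite 2 [← add_zero v] at this
      exact add_left_cancel this
    have : ((1:ℕ) : ZMod m) = 0 := by exact_mod_cast h1
    rw [ZMod.natCast_eq_zero_iff] at this
    have := Nat.le_of_dvd one_pos this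
    omega
  · left; rfl

lemma mem_arc {a : ZMod m} {k : ℕ} {v : ZMod m} :
    v ∈ arc a k ↔ ∃ j < k, a + (j : ZMod m) = v := by
  simp [arc]

lemma arc_bundle (hm : 3 ≤ m) (a : ZMod m) (k : ℕ) : IsBundle (cycleGraph m) (arc a k) := by
  rcases Nat.eq_zero_or_pos k with rfl | hk
  · left; simp [arc]
  · right
    rw [SimpleGraph.connected_iff]
    have hmem : ∀ j, j < k → a + (j : ZMod m) ∈ arc a k := fun j hj => mem_arc.2 ⟨j, hj, rfl⟩
    constructor
    · -- preconnected
      have key : ∀ j (hj : j < k),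
          ((cycleGraph m).induce (arc a k : Set (ZMod m))).Reachable
            ⟨a, by simpa using hmem 0 hk⟩ ⟨a + (j : ZMod m), hmem j hj⟩ := by
        intro j
        induction j with
        | zero => intro _; simp only [Nat.cast_zero, add_zero]; exact SimpleGraph.Reachable.refl _
        | succ j ih =>
          intro hj
          have h1 : j < k := Nat.lt_of_succ_lt hj
          refine (ih h1).trans (SimpleGraph.Adj.reachable ?_)
          have : (cycleGraph m).Adj (a + (j : ZMod m)) (a + ((j+1 : ℕ) : ZMod m)) := by
            push_cast
            rw [← add_assoc]
            exact cycle_adj hm _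
          exact this
      rintro ⟨u, hu⟩ ⟨v, hv⟩
      have hu' := mem_arc.1 (by exact_mod_cast hu)
      have hv' := mem_arc.1 (by exact_mod_cast hv)
      obtain ⟨j1, hj1, rfl⟩ := hu'
      obtain ⟨j2, hj2, rfl⟩ := hv'
      exact (key j1 hj1).symm.trans (key j2 hj2)
    · exact ⟨⟨a, by simpa using hmem 0 hk⟩⟩
end Arc

section Basics
variable {m n : ℕ} [NeZero m]

lemma psi_inj {z z' : ℕ} (hz : z < m) (hz' : z' < m) (a : ZMod m)
    (h : a + (z : ZMod m) = a + (z' : ZMod m)) : z = z' := by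
  have h2 : (z : ZMod m) = (z' : ZMod m) := by exact add_left_cancel h
  have := congrArg ZMod.val h2
  rwa [ZMod.val_natCast_of_lt hz, ZMod.val_natCast_of_lt hz'] at this

lemma arc_m_eq_univ (a : ZMod m) : arc (m := m) a m = Finset.univ := by
  apply Finset.eq_univ_iff_forall.2
  intro v
  refine mem_arc.2 ⟨(v - a).val, ZMod.val_lt _, ?_⟩
  rw [ZMod.natCast_rightInverse (v - a)]
  ring

lemma exists_split (hm : 3 ≤ m) (hn : 1 ≤ n) :
    ∃ P : Fin n → Finset (ZMod m), IsSplitOn (cycleGraph m) Finset.univ n P := by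
  refine ⟨fun i => if i = ⟨0, hn⟩ then Finset.univ else ∅, ?_, ?_, ?_, ?_⟩
  · intro i
    by_cases h : i = ⟨0, hn⟩ <;> simp [h]
    · rw [← arc_m_eq_univ (0 : ZMod m)]; exact arc_bundle hm 0 m
    · left; simp
  · intro i j hij
    by_cases h : i = ⟨0, hn⟩ <;> by_cases h' : j = ⟨0, hn⟩ <;> simp_all
  · intro i; simp only []; split <;> simp
  · intro v _; exact ⟨⟨0, hn⟩, by simp⟩

/-- attainment of the mms by a single split -/
lemma mms_attained (hm : 3 ≤ m) (hn : 1 ≤ n) (u : ZMod m → ℝ) :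
    ∃ P : Fin n → Finset (ZMod m), IsSplitOn (cycleGraph m) Finset.univ n P ∧
      ∀ i, mms (cycleGraph m) n u ≤ bval u (P i) := by
  classical
  have hn0 : 0 < n := hn
  haveI : NeZero n := ⟨by omega⟩
  set f : (Fin n → Finset (ZMod m)) → ℝ :=
    fun P => Finset.univ.inf' (by simp) (fun i => bval u (P i)) with hf
  have hne : (Finset.univ.filter
      (fun P : Fin n → Finset (ZMod m) => IsSplitOn (cycleGraph m) Finset.univ n P)).Nonempty := by
    obtain ⟨P, hP⟩ := exists_split (n := n) hm hn
    exact ⟨P, by simp [hP]⟩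
  obtain ⟨P, hP, hmax⟩ := Finset.exists_max_image _ f hne
  rw [Finset.mem_filter] at hP
  refine ⟨P, hP.2, fun i => ?_⟩
  have h1 : mms (cycleGraph m) n u ≤ f P := by
    apply csSup_le
    · exact ⟨f P, P, hP.2, fun i => Finset.inf'_le _ (Finset.mem_univ i)⟩
    · rintro q ⟨Q, hQ, hq⟩
      have : q ≤ f Q := Finset.le_inf' _ _ (fun i _ => hq i)
      exact this.trans (hmax Q (by simp [hQ]))
  exact h1.trans (Finset.inf'_le _ (Finset.mem_univ i))
end Basics

section Ival
variable {m : ℕ} [NeZero m]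

/-- value of path interval `[x,y)` based at `a`. -/
noncomputable def ival (u : ZMod m → ℝ) (a : ZMod m) (x y : ℕ) : ℝ :=
  ∑ j ∈ Finset.Ico x y, u (a + (j : ZMod m))

lemma ival_nonneg {u : ZMod m → ℝ} (hu : ∀ v, 0 ≤ u v) (a : ZMod m) (x y : ℕ) :
    0 ≤ ival u a x y := Finset.sum_nonneg (fun _ _ => hu _)

lemma ival_mono {u : ZMod m → ℝ} (hu : ∀ v, 0 ≤ u v) (a : ZMod m) {x y x' y' : ℕ}
    (hx : x' ≤ x) (hy : y ≤ y') : ival u a x y ≤ ival u a x' y' := by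
  apply Finset.sum_le_sum_of_subset_of_nonneg
  · exact Finset.Ico_subset_Ico hx hy
  · exact fun _ _ _ => hu _

lemma ival_shift (u : ZMod m → ℝ) (a : ZMod m) (ℓ x y : ℕ) :
    ival u (a + (ℓ : ZMod m)) x y = ival u a (x + ℓ) (y + ℓ) := by
  unfold ival
  rw [← Finset.map_add_right_Ico, Finset.sum_map]
  apply Finset.sum_congr rfl
  intro j _
  simp only [addRightEmbedding_apply]
  push_cast
  ring_nf

/-- `c` gives `k` pieces of `[0,L)` (based at `a`) each of value ≥ `t`. -/
def GoodCuts (u : ZMod m → ℝ) (a : ZMod m) (L k : ℕ) (t : ℝ) : Prop :=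
  ∃ c : ℕ → ℕ, c 0 = 0 ∧ c k = L ∧ (∀ i < k, c i ≤ c (i+1)) ∧
    (∀ i < k, t ≤ ival u a (c i) (c (i+1)))

lemma steps_mono {c : ℕ → ℕ} {K : ℕ} (h : ∀ i < K, c i ≤ c (i+1)) :
    ∀ i j, i ≤ j → j ≤ K → c i ≤ c j := by
  intro i j
  induction j with
  | zero =>
    intro hij _
    have : i = 0 := by omega
    subst this; exact le_refl _
  | succ j ih =>
    intro hij hjK
    rcases Nat.eq_or_lt_of_le hij with rfl | hlt
    · exact le_refl _
    · exact (ih (by omega) (by omega)).trans (h j (by omega))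

lemma goodCuts_of_nonpos {u : ZMod m → ℝ} (hu : ∀ v, 0 ≤ u v) (a : ZMod m) (L k : ℕ)
    (hk : 1 ≤ k) {t : ℝ} (ht : t ≤ 0) : GoodCuts u a L k t := by
  have hk0 : k ≠ 0 := by omega
  refine ⟨fun p => if p = 0 then 0 else L, by simp, by simp [hk0], ?_, ?_⟩
  · intro i _; dsimp only; split <;> split <;> omega
  · intro i _
    exact ht.trans (ival_nonneg hu _ _ _)
end Ival

section Classify
variable {m : ℕ} [NeZero m]

lemma val_pred_add_one {w : ZMod m} (hw : w ≠ 0) : (w - 1).val + 1 = w.val := by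
  have h1 : w.val ≠ 0 := by
    intro h
    apply hw
    have := ZMod.natCast_rightInverse (n := m) w
    rw [← this, h]; simp
  have h2 : ((w.val - 1 : ℕ) : ZMod m) = w - 1 := by
    have : ((w.val : ℕ) : ZMod m) = w := ZMod.natCast_rightInverse w
    rw [Nat.cast_sub (by omega)]
    rw [this]; simp
  have h3 : (w - 1).val = w.val - 1 := by
    rw [← h2, ZMod.val_natCast_of_lt (by have := ZMod.val_lt w; omega)]
  omega

lemma bundle_classify (hm : 3 ≤ m) (g0 : ZMod m) (S : Finset (ZMod m))
    (hconn : ((cycleGraph m).induce (S : Set (ZMod m))).Connected)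
    (hg : g0 ∉ S) :
    ∃ x y : ℕ, x ≤ y ∧ y ≤ m - 1 ∧
      S = (Finset.Ico x y).image (fun z : ℕ => g0 + 1 + (z : ZMod m)) := by
  classical
  set φ : ZMod m → ℕ := fun v => (v - (g0 + 1)).val with hφ
  have hψφ : ∀ v : ZMod m, g0 + 1 + ((φ v : ℕ) : ZMod m) = v := by
    intro v
    rw [hφ]; dsimp only
    rw [ZMod.natCast_rightInverse (v - (g0+1))]
    ring
  have hφlt : ∀ v, φ v < m := fun v => ZMod.val_lt _
  have hφne : ∀ v ∈ S, φ v ≠ m - 1 := by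
    intro v hv h
    apply hg
    have h1 : v = g0 + 1 + ((m - 1 : ℕ) : ZMod m) := by rw [← h, hψφ v]
    have h2 : g0 + 1 + ((m - 1 : ℕ) : ZMod m) = g0 := by
      have : ((1 + (m-1) : ℕ) : ZMod m) = 0 := by
        rw [show 1 + (m-1) = m by omega, ZMod.natCast_self]
      push_cast at this
      rw [add_assoc, show (1 : ZMod m) + ((m-1:ℕ) : ZMod m) = 0 from by exact_mod_cast this,
        add_zero]
    rwa [h1, h2] at hv
  have hstep : ∀ v, v ∈ S → φ (v + 1) = φ v + 1 := by
    intro v hv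
    have hvg : v ≠ g0 := fun h => hg (h ▸ hv)
    have hw : v - g0 ≠ 0 := sub_ne_zero.2 hvg
    have h1 : v + 1 - (g0 + 1) = v - g0 := by ring
    have h2 : v - (g0 + 1) = (v - g0) - 1 := by ring
    rw [hφ]; dsimp only
    rw [h1, h2]
    exact (val_pred_add_one hw).symm
  have hadj : ∀ v w : ZMod m, v ∈ S → w ∈ S → (cycleGraph m).Adj v w →
      φ w = φ v + 1 ∨ φ v = φ w + 1 := by
    intro v w hv hw hadj
    rcases hadj with ⟨-, h | h⟩
    · left; rw [h]; exact hstep v hv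
    · right; rw [h]; exact hstep w hw
  have ivt : ∀ (p q : ((S : Set (ZMod m)))) (w : ((cycleGraph m).induce
      (S : Set (ZMod m))).Walk p q) (z : ℕ),
      ((φ p.1 ≤ z ∧ z ≤ φ q.1) ∨ (φ q.1 ≤ z ∧ z ≤ φ p.1)) → ∃ s ∈ S, φ s = z := by
    intro p q w
    induction w with
    | @nil p0 =>
      intro z hz
      exact ⟨p0.1, p0.2, by omega⟩
    | @cons p p2 q h w ih =>
      intro z hz
      have hstep2 : φ p2.1 = φ p.1 + 1 ∨ φ p.1 = φ p2.1 + 1 :=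
        hadj p.1 p2.1 p.2 p2.2 h
      by_cases hc : (φ p2.1 ≤ z ∧ z ≤ φ q.1) ∨ (φ q.1 ≤ z ∧ z ≤ φ p2.1)
      · exact ih z hc
      · exact ⟨_, p.2, by omega⟩
  have hSne : S.Nonempty := by
    obtain ⟨⟨s, hs⟩⟩ := hconn.nonempty
    exact ⟨s, hs⟩
  set im := S.image φ with him
  have himne : im.Nonempty := hSne.image φ
  set x := im.min' himne with hx
  set e := im.max' himne with he
  have hin : ∀ z, x ≤ z → z ≤ e → z ∈ im := by
    intro z hz1 hz2
    obtain ⟨u0, hu0, hu0e⟩ := Finset.mem_image.1 (im.min'_mem himne)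
    obtain ⟨v0, hv0, hv0e⟩ := Finset.mem_image.1 (im.max'_mem himne)
    have hreach := hconn.preconnected ⟨u0, hu0⟩ ⟨v0, hv0⟩
    obtain ⟨w⟩ := hreach
    obtain ⟨s, hs, hsz⟩ := ivt ⟨u0, hu0⟩ ⟨v0, hv0⟩ w z (by
      left
      constructor
      · show φ u0 ≤ z; omega
      · show z ≤ φ v0; omega)
    exact Finset.mem_image.2 ⟨s, hs, hsz⟩
  refine ⟨x, e + 1, ?_, ?_, ?_⟩
  · have : x ≤ e := Finset.min'_le _ _ (im.max'_mem himne)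
    omega
  · have : e ∈ im := im.max'_mem himne
    obtain ⟨s, hs, hse⟩ := Finset.mem_image.1 this
    have := hφne s hs
    have := hφlt s
    omega
  · ext v
    simp only [Finset.mem_image, Finset.mem_Ico]
    constructor
    · intro hv
      refine ⟨φ v, ⟨?_, ?_⟩, hψφ v⟩
      · exact Finset.min'_le im (φ v) (Finset.mem_image.2 ⟨v, hv, rfl⟩)
      · have := Finset.le_max' im (φ v) (Finset.mem_image.2 ⟨v, hv, rfl⟩)
        omega
    · rintro ⟨z, ⟨hz1, hz2⟩, rfl⟩
      obtain ⟨s, hs, hsz⟩ := Finset.mem_image.1 (hin z hz1 (by omega))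
      rw [← hsz, hψφ s]
      exact hs
end Classify

section Cuts

lemma cuts_of_intervals {ι : Type*} [DecidableEq ι] :
    ∀ (k : ℕ) (J : Finset ι) (b L : ℕ) (s e : ι → ℕ), J.card = k + 1 →
    (∀ i ∈ J, b ≤ s i ∧ s i < e i ∧ e i ≤ L) →
    (∀ i ∈ J, ∀ j ∈ J, i ≠ j → Disjoint (Finset.Ico (s i) (e i)) (Finset.Ico (s j) (e j))) →
    ∃ c : ℕ → ℕ, c 0 = b ∧ c (k+1) = L ∧ (∀ p < k+1, c p ≤ c (p+1)) ∧
      ∀ p < k+1, ∃ i ∈ J, Finset.Ico (s i) (e i) ⊆ Finset.Ico (c p) (c (p+1)) := by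
  intro k
  induction k with
  | zero =>
    intro J b L s e hcard hbound _
    obtain ⟨i, rfl⟩ := Finset.card_eq_one.1 hcard
    obtain ⟨h1, h2, h3⟩ := hbound i (Finset.mem_singleton_self i)
    refine ⟨fun p => if p = 0 then b else L, by simp, by simp, ?_, ?_⟩
    · intro p _; dsimp only; split <;> split <;> omega
    · intro p hp
      interval_cases p
      refine ⟨i, Finset.mem_singleton_self i, ?_⟩
      simp only [if_pos rfl, if_neg one_ne_zero]
      exact Finset.Ico_subset_Ico h1 h3
  | succ k ih =>
    intro J b L s e hcard hbound hdisj
    have hne : J.Nonempty := Finset.card_pos.1 (by omega)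
    obtain ⟨i0, hi0, hmin⟩ := Finset.exists_min_image J s hne
    have hkey : ∀ i ∈ J, i ≠ i0 → e i0 ≤ s i := by
      intro i hi hne'
      by_contra hlt
      have h1 : s i ∈ Finset.Ico (s i0) (e i0) :=
        Finset.mem_Ico.2 ⟨hmin i hi, by omega⟩
      have h2 : s i ∈ Finset.Ico (s i) (e i) :=
        Finset.mem_Ico.2 ⟨le_refl _, (hbound i hi).2.1⟩
      exact Finset.disjoint_left.1 (hdisj i hi i0 hi0 hne') h2 h1
    set J' := J.erase i0 with hJ'
    have hcard' : J'.card = k + 1 := by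
      rw [hJ', Finset.card_erase_of_mem hi0]; omega
    obtain ⟨c', hc0, hcL, hcm, hcp⟩ := ih J' (e i0) L s e hcard'
      (fun i hi => ⟨hkey i (Finset.mem_of_mem_erase hi) (Finset.ne_of_mem_erase hi),
        (hbound i (Finset.mem_of_mem_erase hi)).2.1,
        (hbound i (Finset.mem_of_mem_erase hi)).2.2⟩)
      (fun i hi j hj hne' => hdisj i (Finset.mem_of_mem_erase hi) j
        (Finset.mem_of_mem_erase hj) hne')
    refine ⟨fun p => if p = 0 then b else c' (p - 1), by simp, by simp [hcL], ?_, ?_⟩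
    · intro p hp
      dsimp only
      rcases Nat.eq_zero_or_pos p with rfl | hppos
      · show b ≤ c' 0
        rw [hc0]
        have := (hbound i0 hi0).1
        have := (hbound i0 hi0).2.1
        omega
      · rw [if_neg (by omega), if_neg (by omega)]
        have := hcm (p - 1) (by omega)
        have hp1 : p + 1 - 1 = (p - 1) + 1 := by omega
        rw [hp1]
        exact this
    · intro p hp
      rcases Nat.eq_zero_or_pos p with rfl | hppos
      · refine ⟨i0, hi0, ?_⟩
        show Finset.Ico (s i0) (e i0) ⊆ Finset.Ico b (c' 0)
        rw [hc0]
        exact Finset.Ico_subset_Ico (hbound i0 hi0).1 le_rfl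
      · obtain ⟨i, hi, hsub⟩ := hcp (p - 1) (by omega)
        refine ⟨i, Finset.mem_of_mem_erase hi, ?_⟩
        dsimp only
        rw [if_neg (by omega), if_neg (by omega)]
        have hp1 : p + 1 - 1 = (p - 1) + 1 := by omega
        rw [hp1]
        exact hsub
end Cuts

section LemA
variable {m n : ℕ} [NeZero m]

lemma lemA (hm : 3 ≤ m) (hn : 2 ≤ n) (u : ZMod m → ℝ)
    (hu : ∀ v, 0 ≤ u v) {t : ℝ} (ht : 0 < t) (Q : Fin n → Finset (ZMod m))
    (hQ : IsSplitOn (cycleGraph m) Finset.univ n Q) (hval : ∀ i, t ≤ bval u (Q i))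
    (g0 : ZMod m) : GoodCuts u (g0 + 1) (m - 1) (n - 1) t := by
  classical
  obtain ⟨hb, hd, hsub, hcov⟩ := hQ
  obtain ⟨r, hr⟩ := hcov g0 (Finset.mem_univ g0)
  have hne : ∀ i, (Q i).Nonempty := by
    intro i
    rcases Finset.eq_empty_or_nonempty (Q i) with h | h
    · exfalso
      have := hval i
      rw [h] at this
      simp [bval] at this
      linarith
    · exact h
  have hg0 : ∀ i, i ≠ r → g0 ∉ Q i := by
    intro i hir hg
    exact Finset.disjoint_left.1 (hd i r hir) hg hr
  have hcl : ∀ i, i ≠ r → ∃ x y : ℕ, x ≤ y ∧ y ≤ m - 1 ∧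
      Q i = (Finset.Ico x y).image (fun z : ℕ => g0 + 1 + (z : ZMod m)) := by
    intro i hir
    have hconn : ((cycleGraph m).induce ((Q i : Set (ZMod m)))).Connected := by
      rcases hb i with h | h
      · exfalso
        rw [Finset.coe_eq_empty] at h
        exact (hne i).ne_empty h
      · exact h
    exact bundle_classify hm g0 (Q i) hconn (hg0 i hir)
  choose! x y hxy1 hxy2 hxy3 using hcl
  have hlt : ∀ i, i ≠ r → x i < y i := by
    intro i hir
    rcases Nat.eq_or_lt_of_le (hxy1 i hir) with h | h
    · exfalso
      have := hxy3 i hir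
      rw [h] at this
      simp at this
      exact (hne i).ne_empty this
    · exact h
  have hbval : ∀ i, i ≠ r → bval u (Q i) = ival u (g0 + 1) (x i) (y i) := by
    intro i hir
    rw [hxy3 i hir, bval, ival]
    apply Finset.sum_image
    intro z hz z' hz' hpsi
    have hzy := (Finset.mem_Ico.1 hz).2
    have hzy' := (Finset.mem_Ico.1 hz').2
    have h2 := hxy2 i hir
    apply psi_inj (a := g0 + 1) (by omega) (by omega)
    exact hpsi
  have hdisj : ∀ i ∈ Finset.univ.erase r, ∀ j ∈ Finset.univ.erase r, i ≠ j →
      Disjoint (Finset.Ico (x i) (y i)) (Finset.Ico (x j) (y j)) := by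
    intro i hi j hj hij
    have hir := Finset.ne_of_mem_erase hi
    have hjr := Finset.ne_of_mem_erase hj
    rw [Finset.disjoint_left]
    intro z hzi hzj
    have h1 : (g0 + 1 + (z : ZMod m)) ∈ Q i := by
      rw [hxy3 i hir]; exact Finset.mem_image.2 ⟨z, hzi, rfl⟩
    have h2 : (g0 + 1 + (z : ZMod m)) ∈ Q j := by
      rw [hxy3 j hjr]; exact Finset.mem_image.2 ⟨z, hzj, rfl⟩
    exact Finset.disjoint_left.1 (hd i j hij) h1 h2
  have hcard : (Finset.univ.erase r).card = (n - 2) + 1 := by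
    rw [Finset.card_erase_of_mem (Finset.mem_univ r), Finset.card_univ, Fintype.card_fin]
    omega
  obtain ⟨c, hc0, hcL, hcm, hcp⟩ := cuts_of_intervals (n - 2) (Finset.univ.erase r) 0 (m - 1)
    x y hcard
    (fun i hi => ⟨Nat.zero_le _, hlt i (Finset.ne_of_mem_erase hi),
      hxy2 i (Finset.ne_of_mem_erase hi)⟩)
    hdisj
  have hn1 : n - 1 = (n - 2) + 1 := by omega
  refine ⟨c, hc0, by rw [hn1]; exact hcL, by rw [hn1]; exact hcm, ?_⟩
  intro p hp
  rw [hn1] at hp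
  obtain ⟨i, hi, hsubI⟩ := hcp p hp
  have hir := Finset.ne_of_mem_erase hi
  calc t ≤ bval u (Q i) := hval i
    _ = ival u (g0 + 1) (x i) (y i) := hbval i hir
    _ ≤ ival u (g0 + 1) (c p) (c (p + 1)) := by
        apply Finset.sum_le_sum_of_subset_of_nonneg hsubI
        exact fun _ _ _ => hu _
end LemA

section Greedy
variable {m n : ℕ} [NeZero m]

lemma greedy (u : Fin n → ZMod m → ℝ) (hu : ∀ j v, 0 ≤ u j v) (t : Fin n → ℝ) :
    ∀ (k : ℕ) (T : Finset (Fin n)) (a : ZMod m) (L : ℕ), T.card = k + 1 →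
    (∀ j ∈ T, GoodCuts (u j) a L (k+1) (t j)) →
    ∃ g : Fin n → Finset ℕ,
      (∀ j, ∃ x y, g j = Finset.Ico x y) ∧
      (∀ j ∉ T, g j = ∅) ∧
      (∀ j ∈ T, t j ≤ ∑ z ∈ g j, u j (a + (z : ZMod m))) ∧
      (∀ i j, i ≠ j → Disjoint (g i) (g j)) ∧
      (Finset.univ.biUnion g = Finset.range L) := by
  classical
  intro k
  induction k with
  | zero =>
    intro T a L hcard hcuts
    obtain ⟨j0, rfl⟩ := Finset.card_eq_one.1 hcard
    obtain ⟨c, hc0, hcL, _, hcv⟩ := hcuts j0 (Finset.mem_singleton_self j0)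
    refine ⟨fun i => if i = j0 then Finset.range L else ∅, ?_, ?_, ?_, ?_, ?_⟩
    · intro j
      by_cases h : j = j0
      · exact ⟨0, L, by dsimp only; rw [if_pos h, Finset.range_eq_Ico]⟩
      · exact ⟨0, 0, by dsimp only; rw [if_neg h]; simp⟩
    · intro j hj
      rw [Finset.mem_singleton] at hj
      simp [hj]
    · intro j hj
      rw [Finset.mem_singleton] at hj
      subst hj
      simp only [if_pos rfl]
      have := hcv 0 Nat.one_pos
      rw [hc0, hcL] at this
      rw [Finset.range_eq_Ico]
      exact this
    · intro i j hij
      by_cases h : i = j0 <;> by_cases h' : j = j0 <;> simp_all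
    · ext w
      simp only [Finset.mem_biUnion, Finset.mem_univ, true_and]
      constructor
      · rintro ⟨j, hj⟩
        by_cases h : j = j0
        · rwa [if_pos h] at hj
        · rw [if_neg h] at hj; exact absurd hj (Finset.notMem_empty w)
      · intro hw; exact ⟨j0, by simp [hw]⟩
  | succ k ih =>
    intro T a L hcard hcuts
    have hTne : T.Nonempty := Finset.card_pos.1 (by omega)
    choose! c hc0 hcL hcm hcv using hcuts
    set Sset : Fin n → Set ℕ := fun j => {ℓ | ℓ ≤ L ∧ t j ≤ ival (u j) a 0 ℓ} with hSset
    have hSne : ∀ j ∈ T, c j 1 ∈ Sset j := by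
      intro j hj
      constructor
      · rw [← hcL j hj]
        exact steps_mono (hcm j hj) 1 (k + 2) (by omega) (le_refl _)
      · have := hcv j hj 0 (by omega)
        rwa [hc0 j hj] at this
    set ℓf : Fin n → ℕ := fun j => sInf (Sset j) with hℓf
    obtain ⟨js, hjs, hmin⟩ := Finset.exists_min_image T ℓf hTne
    have hmem : ℓf js ∈ Sset js := Nat.sInf_mem ⟨c js 1, hSne js hjs⟩
    set ℓs := ℓf js with hℓs
    have hℓL : ℓs ≤ L := hmem.1
    have hℓval : t js ≤ ival (u js) a 0 ℓs := hmem.2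
    have hℓle : ∀ j ∈ T, ℓs ≤ c j 1 := by
      intro j hj
      exact (hmin j hj).trans (Nat.sInf_le (hSne j hj))
    set T' := T.erase js with hT'
    have hcard' : T'.card = k + 1 := by
      rw [hT', Finset.card_erase_of_mem hjs]; omega
    have hcuts' : ∀ j ∈ T', GoodCuts (u j) (a + (ℓs : ZMod m)) (L - ℓs) (k+1) (t j) := by
      intro j hj
      have hjT := Finset.mem_of_mem_erase hj
      have hc1 : ℓs ≤ c j 1 := hℓle j hjT
      have hmono : ∀ p q, p ≤ q → q ≤ k + 2 → c j p ≤ c j q :=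
        fun p q h1 h2 => steps_mono (hcm j hjT) p q h1 h2
      refine ⟨fun p => if p = 0 then 0 else c j (p+1) - ℓs, by simp, ?_, ?_, ?_⟩
      · show (if k + 1 = 0 then 0 else c j (k+2) - ℓs) = L - ℓs
        rw [if_neg (by omega), hcL j hjT]
      · intro p hp
        dsimp only
        rcases Nat.eq_zero_or_pos p with rfl | hpp
        · simp
        · rw [if_neg (by omega), if_neg (by omega)]
          exact Nat.sub_le_sub_right (hmono (p+1) (p+2) (by omega) (by omega)) ℓs
      · intro p hp
        rcases Nat.eq_zero_or_pos p with rfl | hpp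
        · show t j ≤ ival (u j) (a + (ℓs : ZMod m)) 0 (c j (0+1+1) - ℓs)
          rw [ival_shift]
          have hle2 : ℓs ≤ c j 2 := hc1.trans (hmono 1 2 (by omega) (by omega))
          rw [Nat.sub_add_cancel hle2, Nat.zero_add]
          calc t j ≤ ival (u j) a (c j 1) (c j 2) := by
                have := hcv j hjT 1 (by omega); exact this
            _ ≤ ival (u j) a ℓs (c j 2) := ival_mono (hu j) a hc1 (le_refl _)
        · show t j ≤ ival (u j) (a + (ℓs : ZMod m))
            (if p = 0 then 0 else c j (p+1) - ℓs) (if p + 1 = 0 then 0 else c j (p+2) - ℓs)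
          rw [if_neg (by omega), if_neg (by omega), ival_shift]
          have hle1 : ℓs ≤ c j (p+1) := hc1.trans (hmono 1 (p+1) (by omega) (by omega))
          have hle2 : ℓs ≤ c j (p+2) := hle1.trans (hmono (p+1) (p+2) (by omega) (by omega))
          rw [Nat.sub_add_cancel hle1, Nat.sub_add_cancel hle2]
          exact hcv j hjT (p+1) (by omega)
    obtain ⟨g', hint', hout', hval', hdis', hcov'⟩ :=
      ih T' (a + (ℓs : ZMod m)) (L - ℓs) hcard' hcuts'
    have hg'mem : ∀ j z, z ∈ g' j → z < L - ℓs := by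
      intro j z hz
      have : z ∈ Finset.univ.biUnion g' := Finset.mem_biUnion.2 ⟨j, Finset.mem_univ j, hz⟩
      rw [hcov'] at this
      exact Finset.mem_range.1 this
    refine ⟨fun j => if j = js then Finset.range ℓs else (g' j).image (· + ℓs),
      ?_, ?_, ?_, ?_, ?_⟩
    · intro j
      by_cases h : j = js
      · exact ⟨0, ℓs, by dsimp only; rw [if_pos h, Finset.range_eq_Ico]⟩
      · obtain ⟨x, y, hxy⟩ := hint' j
        refine ⟨x + ℓs, y + ℓs, ?_⟩
        simp only [if_neg h, hxy]
        exact Finset.image_add_right_Ico x y ℓs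
    · intro j hj
      have hjs' : j ≠ js := fun h => hj (h ▸ hjs)
      have : j ∉ T' := fun h => hj (Finset.mem_of_mem_erase h)
      dsimp only
      rw [if_neg hjs', hout' j this, Finset.image_empty]
    · intro j hj
      by_cases h : j = js
      · subst h
        simp only [if_pos rfl]
        rw [Finset.range_eq_Ico]
        exact hℓval
      · have hjT' : j ∈ T' := Finset.mem_erase.2 ⟨h, hj⟩
        simp only [if_neg h]
        rw [Finset.sum_image (by intro z _ z' _ h; simp only at h; omega)]
        refine (hval' j hjT').trans (le_of_eq ?_)
        apply Finset.sum_congr rfl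
        intro z _
        congr 1
        push_cast
        ring
    · intro i j hij
      by_cases h : i = js <;> by_cases h' : j = js
      · exact absurd (h.trans h'.symm) hij
      · subst h
        simp only [if_pos rfl, if_neg h']
        rw [Finset.disjoint_left]
        intro w hw hw'
        obtain ⟨z, _, rfl⟩ := Finset.mem_image.1 hw'
        have := Finset.mem_range.1 hw
        omega
      · subst h'
        simp only [if_pos rfl, if_neg h]
        rw [Finset.disjoint_left]
        intro w hw hw'
        obtain ⟨z, _, rfl⟩ := Finset.mem_image.1 hw
        have := Finset.mem_range.1 hw'
        omega
      · simp only [if_neg h, if_neg h']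
        rw [Finset.disjoint_left]
        intro w hw hw'
        obtain ⟨z, hz, rfl⟩ := Finset.mem_image.1 hw
        obtain ⟨z', hz', he⟩ := Finset.mem_image.1 hw'
        have : z' = z := by omega
        subst this
        exact Finset.disjoint_left.1 (hdis' i j hij) hz hz'
    · ext w
      simp only [Finset.mem_biUnion, Finset.mem_univ, true_and, Finset.mem_range]
      constructor
      · rintro ⟨j, hj⟩
        by_cases h : j = js
        · rw [if_pos h] at hj
          have := Finset.mem_range.1 hj
          omega
        · rw [if_neg h] at hj
          obtain ⟨z, hz, rfl⟩ := Finset.mem_image.1 hj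
          have := hg'mem j z hz
          omega
      · intro hw
        by_cases h : w < ℓs
        · exact ⟨js, by simp [Finset.mem_range, h]⟩
        · have : w - ℓs ∈ Finset.univ.biUnion g' := by
            rw [hcov']
            exact Finset.mem_range.2 (by omega)
          obtain ⟨j, _, hj⟩ := Finset.mem_biUnion.1 this
          have hjs' : j ≠ js := by
            intro he
            rw [he, hout' js (Finset.notMem_erase js T)] at hj
            exact Finset.notMem_empty _ hj
          refine ⟨j, ?_⟩
          rw [if_neg hjs']
          exact Finset.mem_image.2 ⟨w - ℓs, hj, by omega⟩
end Greedy

section Final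
variable {m n : ℕ} [NeZero m]

lemma image_Ico_arc (a : ZMod m) (x y : ℕ) :
    (Finset.Ico x y).image (fun z : ℕ => a + (z : ZMod m)) = arc (a + (x : ZMod m)) (y - x) := by
  ext v
  simp only [Finset.mem_image, Finset.mem_Ico, mem_arc]
  constructor
  · rintro ⟨z, ⟨h1, h2⟩, rfl⟩
    refine ⟨z - x, by omega, ?_⟩
    rw [Nat.cast_sub h1]
    ring
  · rintro ⟨w, hw, rfl⟩
    refine ⟨x + w, ⟨by omega, by omega⟩, by push_cast; ring⟩

lemma split_card_sum {P : Fin n → Finset (ZMod m)}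
    (hP : IsSplitOn (cycleGraph m) Finset.univ n P) :
    ∑ i, (P i).card = m := by
  classical
  obtain ⟨-, hd, -, hcov⟩ := hP
  have h1 : (Finset.univ : Finset (ZMod m)) = Finset.univ.biUnion P := by
    apply Finset.Subset.antisymm
    · intro v hv
      obtain ⟨i, hi⟩ := hcov v hv
      exact Finset.mem_biUnion.2 ⟨i, Finset.mem_univ i, hi⟩
    · intro v _; exact Finset.mem_univ v
  have h2 := congrArg Finset.card h1
  rw [Finset.card_univ, ZMod.card, Finset.card_biUnion
    (fun i _ j _ hij => hd i j hij)] at h2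
  exact h2.symm

theorem stmt5' (hm : 3 ≤ m) (hmn : m < 2 * n)
    (us : Fin n → ZMod m → ℝ) (hus : ∀ i v, 0 ≤ us i v) :
    ∃ P : Fin n → Finset (ZMod m), IsSplitOn (cycleGraph m) Finset.univ n P ∧
      ∀ i, mms (cycleGraph m) n (us i) ≤ bval (us i) (P i) := by
  classical
  have hn2 : 2 ≤ n := by omega
  set t : Fin n → ℝ := fun i => mms (cycleGraph m) n (us i) with ht
  obtain ⟨Popt, hPopt, hPval⟩ :
      ∃ P : Fin n → (Fin n → Finset (ZMod m)),
        (∀ i, IsSplitOn (cycleGraph m) Finset.univ n (P i)) ∧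
        (∀ i r, t i ≤ bval (us i) (P i r)) := by
    have h := fun i => mms_attained (n := n) hm (by omega) (us i)
    choose P h1 h2 using h
    exact ⟨P, h1, h2⟩
  -- choose the lucky agent j0 and its singleton good g0
  obtain ⟨j0, g0, hg0⟩ : ∃ (j0 : Fin n) (g0 : ZMod m), t j0 ≤ us j0 g0 := by
    by_cases hpos : ∃ i, 0 < t i
    · obtain ⟨i, hi⟩ := hpos
      have hsum := split_card_sum (hPopt i)
      have hbig : ∃ r, (Popt i r).card ≤ 1 := by
        by_contra hc
        push_neg at hc
        have : ∑ r, (Popt i r).card ≥ ∑ _r : Fin n, 2 :=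
          Finset.sum_le_sum (fun r _ => hc r)
        simp at this
        omega
      obtain ⟨r, hr⟩ := hbig
      have hne : (Popt i r).Nonempty := by
        rcases Finset.eq_empty_or_nonempty (Popt i r) with h | h
        · exfalso
          have := hPval i r
          rw [h] at this
          simp [bval] at this
          linarith
        · exact h
      have hcard1 : (Popt i r).card = 1 := by
        have := Finset.card_pos.2 hne; omega
      obtain ⟨g, hg⟩ := Finset.card_eq_one.1 hcard1
      refine ⟨i, g, ?_⟩
      have := hPval i r
      rwa [hg, bval, Finset.sum_singleton] at this
    · push_neg at hpos
      exact ⟨⟨0, by omega⟩, 0, (hpos _).trans (hus _ 0)⟩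
  have hn1 : n - 1 = (n - 2) + 1 := by omega
  have hcuts : ∀ j ∈ Finset.univ.erase j0,
      GoodCuts (us j) (g0 + 1) (m - 1) ((n - 2) + 1) (t j) := by
    intro j _
    rw [← hn1]
    by_cases hj : 0 < t j
    · exact lemA hm hn2 (us j) (hus j) hj (Popt j) (hPopt j) (hPval j) g0
    · exact goodCuts_of_nonpos (hus j) _ _ _ (by omega) (by linarith)
  have hcardT : (Finset.univ.erase j0).card = (n - 2) + 1 := by
    rw [Finset.card_erase_of_mem (Finset.mem_univ j0), Finset.card_univ, Fintype.card_fin]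
    omega
  obtain ⟨g, hint, hout, hval, hdis, hcov⟩ :=
    greedy us hus t (n - 2) (Finset.univ.erase j0) (g0 + 1) (m - 1) hcardT hcuts
  have hgmem : ∀ j z, z ∈ g j → z < m - 1 := by
    intro j z hz
    have : z ∈ Finset.univ.biUnion g := Finset.mem_biUnion.2 ⟨j, Finset.mem_univ j, hz⟩
    rw [hcov] at this
    exact Finset.mem_range.1 this
  set ψ : ℕ → ZMod m := fun z => g0 + 1 + (z : ZMod m) with hψ
  have hψg0 : ∀ z, z < m - 1 → ψ z ≠ g0 := by
    intro z hz he
    have h1 : ((1 + z : ℕ) : ZMod m) = 0 := by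
      have : g0 + ((1 + z : ℕ) : ZMod m) = g0 + 0 := by
        push_cast
        rw [add_zero, ← add_assoc]
        exact he
      exact add_left_cancel this
    rw [ZMod.natCast_eq_zero_iff] at h1
    have := Nat.le_of_dvd (by omega) h1
    omega
  refine ⟨fun j => if j = j0 then {g0} else (g j).image ψ, ⟨?_, ?_, ?_, ?_⟩, ?_⟩
  · -- bundles
    intro j
    by_cases h : j = j0
    · dsimp only; rw [if_pos h]
      have : ({g0} : Finset (ZMod m)) = arc g0 1 := by
        simp [arc]
      rw [this]
      exact arc_bundle hm g0 1
    · dsimp only; rw [if_neg h]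
      obtain ⟨x, y, hxy⟩ := hint j
      rw [hxy, hψ, image_Ico_arc]
      exact arc_bundle hm _ _
  · -- disjoint
    intro i j hij
    have key : ∀ i j, i ≠ j0 → j ≠ j0 → i ≠ j →
        Disjoint ((g i).image ψ) ((g j).image ψ) := by
      intro i j hi hj hij
      rw [Finset.disjoint_left]
      intro v hv hv'
      obtain ⟨z, hz, rfl⟩ := Finset.mem_image.1 hv
      obtain ⟨z', hz', he⟩ := Finset.mem_image.1 hv'
      have h1 := hgmem i z hz
      have h2 := hgmem j z' hz'
      have : z' = z := psi_inj (by omega) (by omega) (g0 + 1) he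
      subst this
      exact Finset.disjoint_left.1 (hdis j i (Ne.symm hij)) hz' hz
    have keyg : ∀ j, j ≠ j0 → Disjoint ({g0} : Finset (ZMod m)) ((g j).image ψ) := by
      intro j hj
      rw [Finset.disjoint_left]
      intro v hv hv'
      rw [Finset.mem_singleton] at hv
      subst hv
      obtain ⟨z, hz, he⟩ := Finset.mem_image.1 hv'
      exact hψg0 z (hgmem j z hz) he
    by_cases h : i = j0 <;> by_cases h' : j = j0
    · exact absurd (h.trans h'.symm) hij
    · dsimp only; rw [if_pos h, if_neg h']
      exact keyg j h'
    · dsimp only; rw [if_neg h, if_pos h']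
      exact (keyg i h).symm
    · dsimp only; rw [if_neg h, if_neg h']
      exact key i j h h' hij
  · intro i
    dsimp only
    split <;> exact Finset.subset_univ _
  · -- cover
    intro v _
    by_cases h : v = g0
    · exact ⟨j0, by dsimp only; rw [if_pos rfl]; simp [h]⟩
    · set z := (v - (g0 + 1)).val with hz
      have hzlt : z < m := ZMod.val_lt _
      have hψz : ψ z = v := by
        rw [hψ, hz]
        dsimp only
        rw [ZMod.natCast_rightInverse (v - (g0 + 1))]
        ring
      have hzne : z ≠ m - 1 := by
        intro hzm
        apply h
        rw [← hψz, hψ]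
        dsimp only
        rw [hzm]
        have : ((1 + (m - 1) : ℕ) : ZMod m) = 0 := by
          rw [show 1 + (m - 1) = m by omega, ZMod.natCast_self]
        push_cast at this
        rw [add_assoc]
        rw [show (1 : ZMod m) + ((m - 1 : ℕ) : ZMod m) = 0 from by exact_mod_cast this]
        rw [add_zero]
      have : z ∈ Finset.univ.biUnion g := by
        rw [hcov]
        exact Finset.mem_range.2 (by omega)
      obtain ⟨j, _, hj⟩ := Finset.mem_biUnion.1 this
      have hjne : j ≠ j0 := by
        intro he
        rw [he, hout j0 (Finset.notMem_erase j0 _)] at hj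
        exact Finset.notMem_empty _ hj
      refine ⟨j, ?_⟩
      dsimp only
      rw [if_neg hjne]
      exact Finset.mem_image.2 ⟨z, hj, hψz⟩
  · -- values
    intro i
    by_cases h : i = j0
    · subst h
      dsimp only
      rw [if_pos rfl, bval, Finset.sum_singleton]
      exact hg0
    · dsimp only
      rw [if_neg h, bval]
      rw [Finset.sum_image (by
        intro z hz z' hz' he
        have h1 := hgmem i z hz
        have h2 := hgmem i z' hz'
        exact psi_inj (by omega) (by omega) (g0 + 1) he)]
      exact hval i (Finset.mem_erase.2 ⟨h, Finset.mem_univ i⟩)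
end Final

/-- if `m < 2n` then an mms-allocation of `m` goods on a cycle
to `n` agents exists. -/
theorem stmt5 (m n : ℕ) [NeZero m] (hm : 3 ≤ m) (hmn : m < 2 * n)
    (us : Fin n → ZMod m → ℝ) (hus : ∀ i v, 0 ≤ us i v) :
    ∃ P : Fin n → Finset (ZMod m), IsSplitOn (cycleGraph m) Finset.univ n P ∧
      ∀ i, mms (cycleGraph m) n (us i) ≤ bval (us i) (P i) :=
  stmt5' hm hmn us hus
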